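/- arXiv:2404.15986 — 2 statements merged into one kernel-verified Lean document; each statement's English description precedes it below -/
import Mathlib

section
/- Let 𝒢 be an undirected, mutant-biased fitness graph with n nodes, and let S ⊆ V be any seed set. Then the expected absorption time of the Heterogeneous Moran process started at S satisfies T(𝒢,S) ≤ (n² · m_max / r_min)³, where m_max = max_{u∈V} m(u) and r_min = min_{u∈V} r(u). -/
open Finset
open scoped Classical

/-- A fitness graph: a finite strongly connected weighted directed graph together with
mutant and resident fitness functions. `w u v > 0` encodes that `(u,v)` is an edge
of non-zero weight; `w u ·` is a probability distribution. -/
structure FitnessGraph (V : Type) [Fintype V] [DecidableEq V] where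
  w : V → V → ℝ
  m : V → ℝ
  r : V → ℝ
  w_nonneg : ∀ u v, 0 ≤ w u v
  w_rowsum : ∀ u, ∑ v, w u v = 1
  strongly_connected : ∀ u v : V, Relation.ReflTransGen (fun a b => 0 < w a b) u v
  m_pos : ∀ u, 0 < m u
  r_pos : ∀ u, 0 < r u

variable {V : Type} [Fintype V] [DecidableEq V]

/-- A fitness graph is mutant-biased if `m(u) ≥ r(u)` for every node `u`. -/
def FitnessGraph.MutantBiased (G : FitnessGraph V) : Prop :=
  ∀ u, G.r u ≤ G.m u

/-- The (out-)degree of a node: the number of neighbors along edges of non-zero weight. -/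
noncomputable def FitnessGraph.deg (G : FitnessGraph V) (u : V) : ℕ :=
  (Finset.univ.filter fun v => 0 < G.w u v).card

/-- A fitness graph is undirected if its edge relation is symmetric and the weights
are uniform: `w(u,v) = 1/d(u)` for every edge `(u,v)`. -/
def FitnessGraph.Undirected (G : FitnessGraph V) : Prop :=
  (∀ u v, 0 < G.w u v → 0 < G.w v u) ∧
  ∀ u v, 0 < G.w u v → G.w u v = 1 / (G.deg u : ℝ)

/-- The fitness of node `u` in configuration `X`: `m(u)` if `u` is a mutant, `r(u)` otherwise. -/
def FitnessGraph.fit (G : FitnessGraph V) (X : Finset V) (u : V) : ℝ :=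
  if u ∈ X then G.m u else G.r u

/-- Total population fitness in configuration `X`. -/
def FitnessGraph.totalFit (G : FitnessGraph V) (X : Finset V) : ℝ :=
  ∑ u, G.fit X u

/-- The configuration resulting from `X` when `u` reproduces and replaces `v`. -/
def moranNext (X : Finset V) (u v : V) : Finset V :=
  if u ∈ X then insert v X else X.erase v

/-- One-step transition probability of the Heterogeneous Moran process. -/
noncomputable def FitnessGraph.step (G : FitnessGraph V) (X Y : Finset V) : ℝ :=
  ∑ u, ∑ v, (G.fit X u / G.totalFit X) * G.w u v * (if moranNext X u v = Y then 1 else 0)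

/-- `t`-step transition probability of the Heterogeneous Moran process. -/
noncomputable def FitnessGraph.stepN (G : FitnessGraph V) : ℕ → Finset V → Finset V → ℝ
  | 0, X, Y => if X = Y then 1 else 0
  | t + 1, X, Y => ∑ Z, FitnessGraph.stepN G t X Z * G.step Z Y

/-- Fixation probability: the probability that, started from seed set `S`, the process
eventually reaches the all-mutant configuration `V`; since `V` is absorbing this equals
`⨆ t, P(X_t = V)`. -/
noncomputable def FitnessGraph.fp (G : FitnessGraph V) (S : Finset V) : ℝ :=
  ⨆ t : ℕ, G.stepN t S Finset.univ

/-- Maximum mutant fitness in the graph. -/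
noncomputable def FitnessGraph.mmax (G : FitnessGraph V) [Nonempty V] : ℝ :=
  Finset.univ.sup' Finset.univ_nonempty G.m

/-- Minimum resident fitness in the graph. -/
noncomputable def FitnessGraph.rmin (G : FitnessGraph V) [Nonempty V] : ℝ :=
  Finset.univ.inf' Finset.univ_nonempty G.r

/-- The expected absorption time `T(𝒢,S) = ∑_{t ≥ 0} P(X_t ∉ {∅, V})`. -/
noncomputable def FitnessGraph.absorbTime (G : FitnessGraph V) (S : Finset V) : ENNReal :=
  ∑' t : ℕ, ENNReal.ofReal
    (∑ X ∈ Finset.univ.filter (fun X : Finset V => X ≠ ∅ ∧ X ≠ Finset.univ), G.stepN t S X)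

namespace FitnessGraph

variable (G : FitnessGraph V)

lemma deg_pos (u : V) : 0 < G.deg u := by
  rw [FitnessGraph.deg, Finset.card_pos]
  by_contra h
  rw [Finset.not_nonempty_iff_eq_empty, Finset.filter_eq_empty_iff] at h
  have : ∑ v, G.w u v = 0 := by
    apply Finset.sum_eq_zero
    intro v hv
    have h1 := G.w_nonneg u v
    have h2 := h hv
    push_neg at h2
    linarith
  have := G.w_rowsum u
  linarith

lemma deg_le_card (u : V) : G.deg u ≤ Fintype.card V := by
  simpa [FitnessGraph.deg] using Finset.card_filter_le Finset.univ _

variable [Nonempty V]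

lemma rmin_pos : 0 < G.rmin := by
  rw [FitnessGraph.rmin, Finset.lt_inf'_iff]
  intro b _
  exact G.r_pos b

lemma rmin_le_r (u : V) : G.rmin ≤ G.r u :=
  Finset.inf'_le _ (Finset.mem_univ u)

lemma m_le_mmax (u : V) : G.m u ≤ G.mmax :=
  Finset.le_sup' _ (Finset.mem_univ u)

lemma mmax_pos : 0 < G.mmax :=
  lt_of_lt_of_le (G.m_pos (Classical.arbitrary V)) (G.m_le_mmax _)

variable {G} (hbias : G.MutantBiased)
include hbias

lemma fit_le_mmax (X : Finset V) (u : V) : G.fit X u ≤ G.mmax := by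
  rw [FitnessGraph.fit]
  split_ifs
  · exact G.m_le_mmax u
  · exact (hbias u).trans (G.m_le_mmax u)

lemma rmin_le_fit (X : Finset V) (u : V) : G.rmin ≤ G.fit X u := by
  rw [FitnessGraph.fit]
  split_ifs
  · exact (G.rmin_le_r u).trans (hbias u)
  · exact G.rmin_le_r u

omit hbias

lemma fit_pos (X : Finset V) (u : V) : 0 < G.fit X u := by
  rw [FitnessGraph.fit]; split_ifs
  · exact G.m_pos u
  · exact G.r_pos u

lemma totalFit_pos (X : Finset V) : 0 < G.totalFit X :=
  Finset.sum_pos (fun u _ => fit_pos X u) Finset.univ_nonempty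

include hbias in
lemma totalFit_le (X : Finset V) : G.totalFit X ≤ (Fintype.card V : ℝ) * G.mmax := by
  calc G.totalFit X ≤ ∑ _u : V, G.mmax := Finset.sum_le_sum (fun u _ => fit_le_mmax hbias X u)
    _ = (Fintype.card V : ℝ) * G.mmax := by simp [mul_comm]

end FitnessGraph

set_option linter.unusedSectionVars false

namespace FitnessGraph

/-- The potential of a configuration: `∑_{u∈X} r(u)/deg(u)`. -/
noncomputable def phi (G : FitnessGraph V) (X : Finset V) : ℝ :=
  ∑ u ∈ X, G.r u / (G.deg u : ℝ)

/-- Change of the potential when `u` reproduces onto `v`. -/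
noncomputable def dphi (G : FitnessGraph V) (X : Finset V) (u v : V) : ℝ :=
  if u ∈ X then (if v ∈ X then 0 else G.r v / (G.deg v : ℝ))
  else (if v ∈ X then -(G.r v / (G.deg v : ℝ)) else 0)

variable (G : FitnessGraph V)

lemma phi_moranNext (X : Finset V) (u v : V) :
    G.phi (moranNext X u v) = G.phi X + G.dphi X u v := by
  rw [moranNext, dphi]
  split_ifs with hu hv hv
  · rw [Finset.insert_eq_self.2 hv, add_zero]
  · rw [phi, phi, Finset.sum_insert hv, add_comm]
  · rw [phi, phi, Finset.sum_erase_eq_sub hv]; ring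
  · rw [Finset.erase_eq_of_notMem hv, add_zero]

lemma phi_nonneg (X : Finset V) : 0 ≤ G.phi X :=
  Finset.sum_nonneg fun u _ => div_nonneg (G.r_pos u).le (Nat.cast_nonneg _)

variable [Nonempty V]

lemma phi_le (hbias : G.MutantBiased) (X : Finset V) :
    G.phi X ≤ (Fintype.card V : ℝ) * G.mmax := by
  have h1 : ∀ u ∈ X, G.r u / (G.deg u : ℝ) ≤ G.mmax := by
    intro u _
    calc G.r u / (G.deg u : ℝ) ≤ G.r u / 1 := by
          apply div_le_div_of_nonneg_left (G.r_pos u).le one_pos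
          exact_mod_cast G.deg_pos u
      _ = G.r u := div_one _
      _ ≤ G.m u := hbias u
      _ ≤ G.mmax := G.m_le_mmax u
  calc G.phi X ≤ ∑ _u ∈ X, G.mmax := Finset.sum_le_sum h1
    _ = (X.card : ℝ) * G.mmax := by simp [mul_comm]
    _ ≤ (Fintype.card V : ℝ) * G.mmax := by
        apply mul_le_mul_of_nonneg_right _ (G.mmax_pos).le
        exact_mod_cast Finset.card_le_card (Finset.subset_univ X)

lemma step_sum (X : Finset V) (g : Finset V → ℝ) :
    ∑ Y, G.step X Y * g Y =
      ∑ u, ∑ v, G.fit X u / G.totalFit X * G.w u v * g (moranNext X u v) := by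
  simp only [FitnessGraph.step, Finset.sum_mul]
  rw [Finset.sum_comm]
  refine Finset.sum_congr rfl fun u _ => ?_
  rw [Finset.sum_comm]
  refine Finset.sum_congr rfl fun v _ => ?_
  have : ∀ Y : Finset V,
      (G.fit X u / G.totalFit X * G.w u v * if moranNext X u v = Y then 1 else 0) * g Y
      = if moranNext X u v = Y then G.fit X u / G.totalFit X * G.w u v * g Y else 0 := by
    intro Y; by_cases h : moranNext X u v = Y <;> simp [h]
  rw [Finset.sum_congr rfl fun Y _ => this Y, Finset.sum_ite_eq]
  simp

lemma p_mass (X : Finset V) :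
    ∑ u, ∑ v, G.fit X u / G.totalFit X * G.w u v = 1 := by
  have h : ∀ u : V, ∑ v, G.fit X u / G.totalFit X * G.w u v
      = G.fit X u / G.totalFit X := by
    intro u
    rw [← Finset.mul_sum, G.w_rowsum, mul_one]
  rw [Finset.sum_congr rfl fun u _ => h u, ← Finset.sum_div, ← FitnessGraph.totalFit,
    div_self (G.totalFit_pos X).ne']

lemma step_mass (X : Finset V) : ∑ Y, G.step X Y = 1 := by
  have := G.step_sum X (fun _ => 1)
  simpa [p_mass] using this

lemma step_nonneg (X Y : Finset V) : 0 ≤ G.step X Y := by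
  refine Finset.sum_nonneg fun u _ => Finset.sum_nonneg fun v _ => ?_
  have h1 : 0 ≤ G.fit X u / G.totalFit X :=
    div_nonneg (G.fit_pos X u).le (G.totalFit_pos X).le
  have h2 := G.w_nonneg u v
  positivity

lemma stepN_nonneg (t : ℕ) (X Y : Finset V) : 0 ≤ G.stepN t X Y := by
  induction t generalizing Y with
  | zero => rw [FitnessGraph.stepN]; positivity
  | succ t ih =>
    rw [FitnessGraph.stepN]
    exact Finset.sum_nonneg fun Z _ => mul_nonneg (ih Z) (G.step_nonneg Z Y)

lemma stepN_mass (t : ℕ) (X : Finset V) : ∑ Y, G.stepN t X Y = 1 := by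
  induction t with
  | zero => simp [FitnessGraph.stepN]
  | succ t ih =>
    simp only [FitnessGraph.stepN]
    rw [Finset.sum_comm]
    calc ∑ Z, ∑ Y, G.stepN t X Z * G.step Z Y
        = ∑ Z, G.stepN t X Z * ∑ Y, G.step Z Y := by
          refine Finset.sum_congr rfl fun Z _ => ?_; rw [Finset.mul_sum]
      _ = 1 := by simp only [step_mass, mul_one]; exact ih

end FitnessGraph

namespace FitnessGraph

variable (G : FitnessGraph V)

lemma crossing (X : Finset V) (hne : X ≠ ∅) (hnu : X ≠ Finset.univ) :
    ∃ a ∈ X, ∃ b, b ∉ X ∧ 0 < G.w a b := by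
  obtain ⟨a0, ha0⟩ := Finset.nonempty_iff_ne_empty.2 hne
  have hb0 : ∃ b0, b0 ∉ X := by
    by_contra h
    push_neg at h
    exact hnu (Finset.eq_univ_iff_forall.2 h)
  obtain ⟨b0, hb0⟩ := hb0
  have hpath := G.strongly_connected a0 b0
  clear hnu hne
  induction hpath with
  | refl => exact absurd ha0 hb0
  | @tail b c hab hbc ih =>
    by_cases hbX : b ∈ X
    · exact ⟨b, hbX, c, hb0, hbc⟩
    · exact ih hbX

variable [Nonempty V]

lemma drift_nonneg (hund : G.Undirected) (hbias : G.MutantBiased) (X : Finset V) :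
    0 ≤ ∑ u, ∑ v, G.fit X u / G.totalFit X * G.w u v * G.dphi X u v := by
  set t : V → V → ℝ := fun u v => G.fit X u / G.totalFit X * G.w u v * G.dphi X u v with ht
  have hF : 0 < G.totalFit X := G.totalFit_pos X
  have hXX : ∀ u ∈ X, ∀ v ∈ X, t u v = 0 := by
    intro u hu v hv; simp [ht, FitnessGraph.dphi, hu, hv]
  have hCC : ∀ u, u ∉ X → ∀ v, v ∉ X → t u v = 0 := by
    intro u hu v hv; simp [ht, FitnessGraph.dphi, hu, hv]
  have key : ∀ u ∈ X, ∀ v, v ∉ X → 0 ≤ t u v + t v u := by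
    intro u hu v hv
    have htuv : t u v = G.m u / G.totalFit X * G.w u v * (G.r v / (G.deg v : ℝ)) := by
      simp [ht, FitnessGraph.dphi, FitnessGraph.fit, hu, hv]
    have htvu : t v u = G.r v / G.totalFit X * G.w v u * (-(G.r u / (G.deg u : ℝ))) := by
      simp [ht, FitnessGraph.dphi, FitnessGraph.fit, hu, hv]
    by_cases hw : 0 < G.w u v
    · have hw' : 0 < G.w v u := hund.1 u v hw
      have hdu : (0:ℝ) < (G.deg u : ℝ) := by exact_mod_cast G.deg_pos u
      have hdv : (0:ℝ) < (G.deg v : ℝ) := by exact_mod_cast G.deg_pos v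
      have hru : 0 < G.r u := G.r_pos u
      have hrv : 0 < G.r v := G.r_pos v
      rw [htuv, htvu, hund.2 u v hw, hund.2 v u hw']
      have heq : G.m u / G.totalFit X * (1 / (G.deg u : ℝ)) * (G.r v / (G.deg v : ℝ)) +
          G.r v / G.totalFit X * (1 / (G.deg v : ℝ)) * (-(G.r u / (G.deg u : ℝ)))
          = G.r v * (G.m u - G.r u) / (G.totalFit X * (G.deg u : ℝ) * (G.deg v : ℝ)) := by
        field_simp
        ring
      rw [heq]
      apply div_nonneg
      · exact mul_nonneg hrv.le (sub_nonneg.2 (hbias u))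
      · positivity
    · have hz : G.w u v = 0 := le_antisymm (not_lt.1 hw) (G.w_nonneg u v)
      have hz' : G.w v u = 0 := by
        by_contra h
        exact hw (hund.1 v u (lt_of_le_of_ne (G.w_nonneg v u) (Ne.symm h)))
      rw [htuv, htvu, hz, hz']
      simp
  have inner1 : ∀ u ∈ X, ∑ v, t u v = ∑ v ∈ Xᶜ, t u v := by
    intro u hu
    rw [← Finset.sum_add_sum_compl X (t u),
      Finset.sum_eq_zero (fun v hv => hXX u hu v hv), zero_add]
  have inner2 : ∀ u, u ∉ X → ∑ v, t u v = ∑ v ∈ X, t u v := by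
    intro u hu
    rw [← Finset.sum_add_sum_compl X (t u),
      Finset.sum_eq_zero (fun v hv => hCC u hu v (Finset.mem_compl.1 hv)), add_zero]
  calc (0:ℝ) ≤ ∑ u ∈ X, ∑ v ∈ Xᶜ, (t u v + t v u) := by
        refine Finset.sum_nonneg fun u hu => Finset.sum_nonneg fun v hv => ?_
        exact key u hu v (Finset.mem_compl.1 hv)
    _ = ∑ u ∈ X, ∑ v ∈ Xᶜ, t u v + ∑ u ∈ X, ∑ v ∈ Xᶜ, t v u := by
        rw [← Finset.sum_add_distrib]
        exact Finset.sum_congr rfl fun u _ => Finset.sum_add_distrib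
    _ = ∑ u ∈ X, ∑ v ∈ Xᶜ, t u v + ∑ u ∈ Xᶜ, ∑ v ∈ X, t u v := by
        rw [Finset.sum_comm (s := X) (t := Xᶜ) (f := fun u v => t v u)]
    _ = ∑ u ∈ X, ∑ v, t u v + ∑ u ∈ Xᶜ, ∑ v, t u v := by
        rw [Finset.sum_congr rfl (fun u hu => (inner1 u hu).symm),
          Finset.sum_congr rfl (fun u hu => (inner2 u (Finset.mem_compl.1 hu)).symm)]
    _ = ∑ u, ∑ v, t u v := Finset.sum_add_sum_compl X _
    _ = ∑ u, ∑ v, G.fit X u / G.totalFit X * G.w u v * G.dphi X u v := rfl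

lemma second_moment (hund : G.Undirected) (hbias : G.MutantBiased) (X : Finset V)
    (hne : X ≠ ∅) (hnu : X ≠ Finset.univ) :
    G.rmin ^ 3 / ((Fintype.card V : ℝ) ^ 4 * G.mmax) ≤
      ∑ u, ∑ v, G.fit X u / G.totalFit X * G.w u v * (G.dphi X u v) ^ 2 := by
  obtain ⟨a, ha, b, hb, hw⟩ := G.crossing X hne hnu
  have hF : 0 < G.totalFit X := G.totalFit_pos X
  have nn : ∀ u v : V, 0 ≤ G.fit X u / G.totalFit X * G.w u v * (G.dphi X u v) ^ 2 := by
    intro u v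
    have h1 : 0 < G.fit X u := G.fit_pos X u
    have h2 := G.w_nonneg u v
    positivity
  have hstep1 : G.fit X a / G.totalFit X * G.w a b * (G.dphi X a b) ^ 2 ≤
      ∑ u, ∑ v, G.fit X u / G.totalFit X * G.w u v * (G.dphi X u v) ^ 2 := by
    calc G.fit X a / G.totalFit X * G.w a b * (G.dphi X a b) ^ 2
        ≤ ∑ v, G.fit X a / G.totalFit X * G.w a v * (G.dphi X a v) ^ 2 :=
          Finset.single_le_sum (fun v _ => nn a v) (Finset.mem_univ b)
      _ ≤ ∑ u, ∑ v, G.fit X u / G.totalFit X * G.w u v * (G.dphi X u v) ^ 2 :=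
          Finset.single_le_sum (fun u _ => Finset.sum_nonneg fun v _ => nn u v)
            (Finset.mem_univ a)
  refine le_trans ?_ hstep1
  have hfa : G.fit X a = G.m a := by simp [FitnessGraph.fit, ha]
  have hda : G.dphi X a b = G.r b / (G.deg b : ℝ) := by simp [FitnessGraph.dphi, ha, hb]
  rw [hfa, hda, hund.2 a b hw]
  set n : ℝ := (Fintype.card V : ℝ) with hn
  have hn1 : (1:ℝ) ≤ n := by
    rw [hn]; exact_mod_cast Fintype.card_pos
  have hn0 : (0:ℝ) < n := lt_of_lt_of_le one_pos hn1
  have hM : 0 < G.mmax := G.mmax_pos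
  have hR : 0 < G.rmin := G.rmin_pos
  have hdu : (0:ℝ) < (G.deg a : ℝ) := by exact_mod_cast G.deg_pos a
  have hdv : (0:ℝ) < (G.deg b : ℝ) := by exact_mod_cast G.deg_pos b
  have hdun : (G.deg a : ℝ) ≤ n := by rw [hn]; exact_mod_cast G.deg_le_card a
  have hdvn : (G.deg b : ℝ) ≤ n := by rw [hn]; exact_mod_cast G.deg_le_card b
  have heq : G.rmin ^ 3 / (n ^ 4 * G.mmax)
      = G.rmin / (n * G.mmax) * (1 / n) * (G.rmin / n) ^ 2 := by
    field_simp
  rw [heq]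
  have f1 : G.rmin / (n * G.mmax) ≤ G.m a / G.totalFit X :=
    div_le_div₀ (G.m_pos a).le ((G.rmin_le_r a).trans (hbias a)) hF (totalFit_le hbias X)
  have f2 : (1:ℝ) / n ≤ 1 / (G.deg a : ℝ) := one_div_le_one_div_of_le hdu hdun
  have f3 : (G.rmin / n) ^ 2 ≤ (G.r b / (G.deg b : ℝ)) ^ 2 := by
    apply pow_le_pow_left₀ (by positivity)
    exact div_le_div₀ (G.r_pos b).le (G.rmin_le_r b) hdv hdvn
  have hma : (0:ℝ) ≤ G.m a / G.totalFit X := div_nonneg (G.m_pos a).le hF.le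
  have h12 : G.rmin / (n * G.mmax) * (1 / n) ≤ G.m a / G.totalFit X * (1 / (G.deg a : ℝ)) :=
    mul_le_mul f1 f2 (by positivity) hma
  exact mul_le_mul h12 f3 (by positivity)
    (mul_nonneg hma (by positivity))

end FitnessGraph

namespace FitnessGraph

variable (G : FitnessGraph V) [Nonempty V]

lemma key_step (hund : G.Undirected) (hbias : G.MutantBiased) (X : Finset V) :
    G.phi X ^ 2 + (if X ≠ ∅ ∧ X ≠ Finset.univ
      then G.rmin ^ 3 / ((Fintype.card V : ℝ) ^ 4 * G.mmax) else 0)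
    ≤ ∑ Y, G.step X Y * G.phi Y ^ 2 := by
  rw [G.step_sum X (fun Y => G.phi Y ^ 2)]
  have expand : ∀ u v : V, G.fit X u / G.totalFit X * G.w u v * G.phi (moranNext X u v) ^ 2
      = G.fit X u / G.totalFit X * G.w u v * G.phi X ^ 2
        + 2 * G.phi X * (G.fit X u / G.totalFit X * G.w u v * G.dphi X u v)
        + G.fit X u / G.totalFit X * G.w u v * G.dphi X u v ^ 2 := by
    intro u v; rw [G.phi_moranNext]; ring
  have hsplit : ∑ u, ∑ v, G.fit X u / G.totalFit X * G.w u v * G.phi (moranNext X u v) ^ 2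
      = G.phi X ^ 2
        + 2 * G.phi X * (∑ u, ∑ v, G.fit X u / G.totalFit X * G.w u v * G.dphi X u v)
        + ∑ u, ∑ v, G.fit X u / G.totalFit X * G.w u v * G.dphi X u v ^ 2 := by
    simp only [expand, Finset.sum_add_distrib]
    congr 1
    congr 1
    · have h : ∀ u : V, ∑ v, G.fit X u / G.totalFit X * G.w u v * G.phi X ^ 2
          = (∑ v, G.fit X u / G.totalFit X * G.w u v) * G.phi X ^ 2 :=
        fun u => (Finset.sum_mul _ _ _).symm
      rw [Finset.sum_congr rfl fun u _ => h u, ← Finset.sum_mul, G.p_mass X, one_mul]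
    · rw [Finset.mul_sum]
      refine Finset.sum_congr rfl fun u _ => ?_
      rw [Finset.mul_sum]
  rw [hsplit]
  have hd := G.drift_nonneg hund hbias X
  have hphi := G.phi_nonneg X
  have hpd := mul_nonneg hphi hd
  have hsm0 : 0 ≤ ∑ u, ∑ v, G.fit X u / G.totalFit X * G.w u v * G.dphi X u v ^ 2 := by
    refine Finset.sum_nonneg fun u _ => Finset.sum_nonneg fun v _ => ?_
    have h1 : 0 < G.fit X u := G.fit_pos X u
    have h2 := G.w_nonneg u v
    have h3 := G.totalFit_pos X
    positivity
  split_ifs with h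
  · have hsm := G.second_moment hund hbias X h.1 h.2
    nlinarith
  · nlinarith

end FitnessGraph

/-- On an undirected mutant-biased fitness graph with `n` nodes, the expected absorption
time of the Heterogeneous Moran process started at any seed set `S` is at most
`(n² · m_max / r_min)³`. -/
theorem expected_absorption_time_bound [Nonempty V] (G : FitnessGraph V)
    (hund : G.Undirected) (hbias : G.MutantBiased) (S : Finset V) :
    G.absorbTime S ≤ ENNReal.ofReal (((Fintype.card V : ℝ) ^ 2 * G.mmax / G.rmin) ^ 3) := by
  rw [FitnessGraph.absorbTime]
  set n : ℝ := (Fintype.card V : ℝ) with hn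
  have hn1 : (1:ℝ) ≤ n := by
    rw [hn]; exact_mod_cast Fintype.card_pos
  have hn0 : (0:ℝ) < n := lt_of_lt_of_le one_pos hn1
  have hM : 0 < G.mmax := G.mmax_pos
  have hR : 0 < G.rmin := G.rmin_pos
  set c : ℝ := G.rmin ^ 3 / (n ^ 4 * G.mmax) with hc
  have hc0 : 0 < c := by rw [hc]; positivity
  set B : ℝ := n * G.mmax with hB
  set A : ℕ → ℝ := fun t => ∑ X, G.stepN t S X * G.phi X ^ 2 with hA
  set P : ℕ → ℝ := fun t =>
    ∑ X ∈ Finset.univ.filter (fun X : Finset V => X ≠ ∅ ∧ X ≠ Finset.univ), G.stepN t S X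
    with hP
  have hPnn : ∀ t, 0 ≤ P t := fun t =>
    Finset.sum_nonneg fun X _ => G.stepN_nonneg t S X
  have hAnn : ∀ t, 0 ≤ A t := fun t =>
    Finset.sum_nonneg fun X _ => mul_nonneg (G.stepN_nonneg t S X) (sq_nonneg _)
  have hAB : ∀ t, A t ≤ B ^ 2 := by
    intro t
    have hterm : ∀ X : Finset V, G.stepN t S X * G.phi X ^ 2 ≤ G.stepN t S X * B ^ 2 := by
      intro X
      apply mul_le_mul_of_nonneg_left _ (G.stepN_nonneg t S X)
      have h1 := G.phi_nonneg X
      have h2 : G.phi X ≤ B := G.phi_le hbias X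
      exact pow_le_pow_left₀ h1 h2 2
    calc A t ≤ ∑ X, G.stepN t S X * B ^ 2 := Finset.sum_le_sum fun X _ => hterm X
      _ = B ^ 2 := by rw [← Finset.sum_mul, G.stepN_mass, one_mul]
  have hstep : ∀ t, A t + c * P t ≤ A (t + 1) := by
    intro t
    have h1 : A (t + 1) = ∑ Z, G.stepN t S Z * ∑ Y, G.step Z Y * G.phi Y ^ 2 := by
      simp only [hA, FitnessGraph.stepN, Finset.sum_mul]
      rw [Finset.sum_comm]
      refine Finset.sum_congr rfl fun Z _ => ?_
      rw [Finset.mul_sum]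
      exact Finset.sum_congr rfl fun Y _ => by ring
    rw [h1]
    calc A t + c * P t
        = ∑ Z, G.stepN t S Z *
            (G.phi Z ^ 2 + (if Z ≠ ∅ ∧ Z ≠ Finset.univ then c else 0)) := by
          simp only [hA, hP]
          rw [Finset.mul_sum, Finset.sum_filter, ← Finset.sum_add_distrib]
          refine Finset.sum_congr rfl fun Z _ => ?_
          by_cases h : Z ≠ ∅ ∧ Z ≠ Finset.univ <;> simp [h] <;> ring
      _ ≤ ∑ Z, G.stepN t S Z * ∑ Y, G.step Z Y * G.phi Y ^ 2 :=
          Finset.sum_le_sum fun Z _ =>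
            mul_le_mul_of_nonneg_left (G.key_step hund hbias Z) (G.stepN_nonneg t S Z)
  have hsum : ∀ T, A 0 + c * ∑ t ∈ Finset.range T, P t ≤ A T := by
    intro T
    induction T with
    | zero => simp
    | succ T ih =>
      rw [Finset.sum_range_succ, mul_add]
      have := hstep T
      linarith
  have hfinal : ∀ T, ∑ t ∈ Finset.range T, P t ≤ B ^ 2 / c := by
    intro T
    rw [le_div_iff₀ hc0]
    have h1 := hsum T
    have h2 := hAB T
    have h3 := hAnn 0
    nlinarith
  have hBc : B ^ 2 / c = (n ^ 2 * G.mmax / G.rmin) ^ 3 := by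
    rw [hB, hc]
    field_simp
  calc ∑' t : ℕ, ENNReal.ofReal (P t)
      ≤ ENNReal.ofReal (B ^ 2 / c) := by
        rw [ENNReal.tsum_eq_iSup_sum]
        refine iSup_le fun s => ?_
        have hsub : s ⊆ Finset.range (s.sup id + 1) := fun x hx =>
          Finset.mem_range.2 (Nat.lt_succ_of_le (Finset.le_sup (f := id) hx))
        calc ∑ t ∈ s, ENNReal.ofReal (P t)
            ≤ ∑ t ∈ Finset.range (s.sup id + 1), ENNReal.ofReal (P t) :=
              Finset.sum_le_sum_of_subset hsub
          _ = ENNReal.ofReal (∑ t ∈ Finset.range (s.sup id + 1), P t) :=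
              (ENNReal.ofReal_sum_of_nonneg fun t _ => hPnn t).symm
          _ ≤ ENNReal.ofReal (B ^ 2 / c) := ENNReal.ofReal_le_ofReal (hfinal _)
    _ = ENNReal.ofReal ((n ^ 2 * G.mmax / G.rmin) ^ 3) := by rw [hBc]
end

section
/- Let 𝒢 be an undirected, mutant-biased fitness graph and define the potential Φ(X)=Σ_{u∈X} m(u)/d(u) for configurations X⊆V. Then Φ is a submartingale for the Heterogeneous Moran process: for every configuration X⊆V, the expected value of Φ after one transition step from X is at least Φ(X). Moreover, the expected one-step change equals Σ_{(u,v)∈E, u∈X, v∉X} m(u)·(m(v)−r(v)) / (d(u)·d(v)·F_X), which is nonnegative. -/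
open Finset
open scoped Classical

variable {V : Type} [Fintype V] [DecidableEq V]

/-- The potential function `Φ(X) = ∑_{u ∈ X} m(u)/d(u)`. -/
noncomputable def FitnessGraph.potential (G : FitnessGraph V) (X : Finset V) : ℝ :=
  ∑ u ∈ X, G.m u / (G.deg u : ℝ)

/-- The expected value of the potential after one transition step of the Heterogeneous
Moran process from configuration `X`. -/
noncomputable def FitnessGraph.expPotentialNext (G : FitnessGraph V) (X : Finset V) : ℝ :=
  ∑ u, ∑ v, (G.fit X u / G.totalFit X) * G.w u v * G.potential (moranNext X u v)


private lemma FG_fit_pos (G : FitnessGraph V) (X : Finset V) (u : V) : 0 < G.fit X u := by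
  unfold FitnessGraph.fit
  split
  · exact G.m_pos u
  · exact G.r_pos u

private lemma FG_totalFit_pos [Nonempty V] (G : FitnessGraph V) (X : Finset V) :
    0 < G.totalFit X :=
  Finset.sum_pos (fun u _ => FG_fit_pos G X u) Finset.univ_nonempty

private lemma FG_deg_pos (G : FitnessGraph V) {u v : V} (h : 0 < G.w u v) :
    (0:ℝ) < (G.deg u : ℝ) := by
  have hv : v ∈ Finset.univ.filter (fun x => 0 < G.w u x) := by simp [h]
  exact_mod_cast Finset.card_pos.2 ⟨v, hv⟩

private lemma FG_potential_moranNext (G : FitnessGraph V) (X : Finset V) (u v : V) :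
    G.potential (moranNext X u v) = G.potential X +
      (if u ∈ X ∧ v ∉ X then G.m v / (G.deg v : ℝ) else 0) -
      (if u ∉ X ∧ v ∈ X then G.m v / (G.deg v : ℝ) else 0) := by
  unfold moranNext FitnessGraph.potential
  by_cases hu : u ∈ X <;> by_cases hv : v ∈ X
  · simp [hu, hv, Finset.insert_eq_self.2 hv]
  · simp only [hu, hv, Finset.sum_insert hv, if_true, if_pos, not_false_iff, and_true,
      true_and, not_true, and_false, if_false, ite_false]
    ring
  · simp only [hu, hv, Finset.sum_erase_eq_sub hv, not_false_iff, and_true, true_and,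
      not_true, and_false, if_false, ite_false, if_true]
    ring
  · simp [hu, hv, Finset.erase_eq_of_notMem hv]

/-- On an undirected mutant-biased fitness graph, the potential `Φ` is a submartingale
for the Heterogeneous Moran process, and the expected one-step change from `X` equals
`∑_{(u,v)∈E, u∈X, v∉X} m(u)(m(v)−r(v))/(d(u)d(v)F_X)`, which is nonnegative. -/
theorem potential_submartingale [Nonempty V] (G : FitnessGraph V)
    (hund : G.Undirected) (hbias : G.MutantBiased) :
    ∀ X : Finset V,
      G.potential X ≤ G.expPotentialNext X ∧
      G.expPotentialNext X - G.potential X =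
        ∑ u ∈ X, ∑ v ∈ Finset.univ.filter (fun v => 0 < G.w u v ∧ v ∉ X),
          G.m u * (G.m v - G.r v) / ((G.deg u : ℝ) * (G.deg v : ℝ) * G.totalFit X) ∧
      0 ≤ ∑ u ∈ X, ∑ v ∈ Finset.univ.filter (fun v => 0 < G.w u v ∧ v ∉ X),
          G.m u * (G.m v - G.r v) / ((G.deg u : ℝ) * (G.deg v : ℝ) * G.totalFit X) := by
  intro X
  have hF : 0 < G.totalFit X := FG_totalFit_pos G X
  have hFne : G.totalFit X ≠ 0 := ne_of_gt hF
  -- the one-step probabilities sum to 1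
  have hsum1 : ∑ u, ∑ v, G.fit X u / G.totalFit X * G.w u v = 1 := by
    have h : ∀ u : V, ∑ v, G.fit X u / G.totalFit X * G.w u v
        = G.fit X u / G.totalFit X := fun u => by
      rw [← Finset.mul_sum, G.w_rowsum, mul_one]
    rw [Finset.sum_congr rfl fun u _ => h u, ← Finset.sum_div]
    exact div_self hFne
  -- expected potential after one step
  have h1 : G.expPotentialNext X = G.potential X +
      ∑ u, ∑ v, G.fit X u / G.totalFit X * G.w u v *
        ((if u ∈ X ∧ v ∉ X then G.m v / (G.deg v : ℝ) else 0) -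
         (if u ∉ X ∧ v ∈ X then G.m v / (G.deg v : ℝ) else 0)) := by
    unfold FitnessGraph.expPotentialNext
    have hterm : ∀ u v : V,
        G.fit X u / G.totalFit X * G.w u v * G.potential (moranNext X u v)
        = G.fit X u / G.totalFit X * G.w u v * G.potential X
          + G.fit X u / G.totalFit X * G.w u v *
            ((if u ∈ X ∧ v ∉ X then G.m v / (G.deg v : ℝ) else 0) -
             (if u ∉ X ∧ v ∈ X then G.m v / (G.deg v : ℝ) else 0)) := by
      intro u v; rw [FG_potential_moranNext]; ring
    simp_rw [hterm, Finset.sum_add_distrib]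
    congr 1
    simp_rw [← Finset.sum_mul]
    rw [hsum1, one_mul]
  -- key pointwise identity on edges
  have key : ∀ u v : V, u ∈ X → v ∉ X → 0 < G.w u v →
      G.m u / G.totalFit X * G.w u v * (G.m v / (G.deg v : ℝ))
      - G.r v / G.totalFit X * G.w v u * (G.m u / (G.deg u : ℝ))
      = G.m u * (G.m v - G.r v) / ((G.deg u : ℝ) * (G.deg v : ℝ) * G.totalFit X) := by
    intro u v hu hv hw
    have hwvu : 0 < G.w v u := hund.1 u v hw
    have hdu : (G.deg u : ℝ) ≠ 0 := ne_of_gt (FG_deg_pos G hw)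
    have hdv : (G.deg v : ℝ) ≠ 0 := ne_of_gt (FG_deg_pos G hwvu)
    rw [hund.2 u v hw, hund.2 v u hwvu]
    field_simp
  -- the middle sum equals A - B
  have h2 : (∑ u, ∑ v, G.fit X u / G.totalFit X * G.w u v *
        ((if u ∈ X ∧ v ∉ X then G.m v / (G.deg v : ℝ) else 0) -
         (if u ∉ X ∧ v ∈ X then G.m v / (G.deg v : ℝ) else 0)))
      = (∑ u, ∑ v, if u ∈ X ∧ v ∉ X ∧ 0 < G.w u v then
            G.m u / G.totalFit X * G.w u v * (G.m v / (G.deg v : ℝ)) else 0)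
      - (∑ u, ∑ v, if u ∉ X ∧ v ∈ X ∧ 0 < G.w u v then
            G.r u / G.totalFit X * G.w u v * (G.m v / (G.deg v : ℝ)) else 0) := by
    simp_rw [← Finset.sum_sub_distrib]
    refine Finset.sum_congr rfl fun u _ => Finset.sum_congr rfl fun v _ => ?_
    by_cases hw : 0 < G.w u v
    · by_cases hu : u ∈ X <;> by_cases hv : v ∈ X <;>
        simp [hu, hv, hw, FitnessGraph.fit]
    · have hw0 : G.w u v = 0 := le_antisymm (not_lt.1 hw) (G.w_nonneg u v)
      simp [hw0, hw]
  -- swap the second double sum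
  have hB : (∑ u, ∑ v, if u ∉ X ∧ v ∈ X ∧ 0 < G.w u v then
        G.r u / G.totalFit X * G.w u v * (G.m v / (G.deg v : ℝ)) else 0)
      = ∑ u, ∑ v, if v ∉ X ∧ u ∈ X ∧ 0 < G.w v u then
        G.r v / G.totalFit X * G.w v u * (G.m u / (G.deg u : ℝ)) else 0 :=
    Finset.sum_comm
  -- rewrite the target sum over univ
  have hR : (∑ u, ∑ v, if u ∈ X then
        (if 0 < G.w u v ∧ v ∉ X then
          G.m u * (G.m v - G.r v) / ((G.deg u : ℝ) * (G.deg v : ℝ) * G.totalFit X)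
        else 0) else 0)
      = ∑ u ∈ X, ∑ v ∈ Finset.univ.filter (fun v => 0 < G.w u v ∧ v ∉ X),
          G.m u * (G.m v - G.r v) / ((G.deg u : ℝ) * (G.deg v : ℝ) * G.totalFit X) := by
    have hgen : ∀ (s : Finset V) (f : V → ℝ),
        (∑ u, if u ∈ s then f u else 0) = ∑ u ∈ s, f u := by
      intro s f
      rw [← Finset.sum_subset (Finset.subset_univ s) (fun x _ hx => if_neg hx)]
      exact Finset.sum_congr rfl fun x hx => if_pos hx
    have e1 : ∀ u : V, (∑ v, if 0 < G.w u v ∧ v ∉ X then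
          G.m u * (G.m v - G.r v) / ((G.deg u : ℝ) * (G.deg v : ℝ) * G.totalFit X) else 0)
        = ∑ v ∈ Finset.univ.filter (fun v => 0 < G.w u v ∧ v ∉ X),
          G.m u * (G.m v - G.r v) / ((G.deg u : ℝ) * (G.deg v : ℝ) * G.totalFit X) := by
      intro u
      rw [← hgen (Finset.univ.filter (fun v => 0 < G.w u v ∧ v ∉ X)) _]
      exact Finset.sum_congr rfl fun v _ => if_congr (by simp) rfl rfl
    calc (∑ u, ∑ v, if u ∈ X then
          (if 0 < G.w u v ∧ v ∉ X then
            G.m u * (G.m v - G.r v) / ((G.deg u : ℝ) * (G.deg v : ℝ) * G.totalFit X)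
          else 0) else 0)
        = ∑ u, if u ∈ X then
            (∑ v ∈ Finset.univ.filter (fun v => 0 < G.w u v ∧ v ∉ X),
              G.m u * (G.m v - G.r v) / ((G.deg u : ℝ) * (G.deg v : ℝ) * G.totalFit X))
          else 0 := by
          refine Finset.sum_congr rfl fun u _ => ?_
          by_cases hu : u ∈ X
          · rw [if_pos hu]
            simp only [hu, if_true]
            exact e1 u
          · simp [hu]
      _ = _ := hgen X _
  -- combine A - B' into the target
  have h4 : (∑ u, ∑ v, if u ∈ X ∧ v ∉ X ∧ 0 < G.w u v then
          G.m u / G.totalFit X * G.w u v * (G.m v / (G.deg v : ℝ)) else 0)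
      - (∑ u, ∑ v, if v ∉ X ∧ u ∈ X ∧ 0 < G.w v u then
          G.r v / G.totalFit X * G.w v u * (G.m u / (G.deg u : ℝ)) else 0)
      = ∑ u ∈ X, ∑ v ∈ Finset.univ.filter (fun v => 0 < G.w u v ∧ v ∉ X),
          G.m u * (G.m v - G.r v) / ((G.deg u : ℝ) * (G.deg v : ℝ) * G.totalFit X) := by
    rw [← hR]
    simp_rw [← Finset.sum_sub_distrib]
    refine Finset.sum_congr rfl fun u _ => Finset.sum_congr rfl fun v _ => ?_
    by_cases hu : u ∈ X
    · by_cases hv : v ∈ X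
      · simp [hu, hv]
      · by_cases hw : 0 < G.w u v
        · have hwvu : 0 < G.w v u := hund.1 u v hw
          rw [if_pos ⟨hu, hv, hw⟩, if_pos ⟨hv, hu, hwvu⟩, if_pos hu, if_pos ⟨hw, hv⟩]
          exact key u v hu hv hw
        · have hwvu : ¬ 0 < G.w v u := fun h => hw (hund.1 v u h)
          simp [hu, hv, hw, hwvu]
    · simp [hu]
  have heq : G.expPotentialNext X - G.potential X =
      ∑ u ∈ X, ∑ v ∈ Finset.univ.filter (fun v => 0 < G.w u v ∧ v ∉ X),
        G.m u * (G.m v - G.r v) / ((G.deg u : ℝ) * (G.deg v : ℝ) * G.totalFit X) := by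
    rw [h1, add_sub_cancel_left, h2, hB, h4]
  have hnn : 0 ≤ ∑ u ∈ X, ∑ v ∈ Finset.univ.filter (fun v => 0 < G.w u v ∧ v ∉ X),
      G.m u * (G.m v - G.r v) / ((G.deg u : ℝ) * (G.deg v : ℝ) * G.totalFit X) := by
    refine Finset.sum_nonneg fun u hu => Finset.sum_nonneg fun v hv => ?_
    simp only [Finset.mem_filter] at hv
    have hdu : (0:ℝ) < (G.deg u : ℝ) := FG_deg_pos G hv.2.1
    have hdv : (0:ℝ) < (G.deg v : ℝ) := FG_deg_pos G (hund.1 u v hv.2.1)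
    exact div_nonneg (mul_nonneg (G.m_pos u).le (sub_nonneg.2 (hbias v)))
      (mul_pos (mul_pos hdu hdv) hF).le
  exact ⟨by linarith, heq, hnn⟩
end
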